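/- Let T = (T_1,…,T_n) be a commuting tuple of contractions on H, G ⊆ {1,…,n} and Ḡ its complement. Define Q ≥ 0 by Q² = SOT-lim_{m→∞} T_Ḡ^m T_Ḡ^{*m} where T_Ḡ is the product of T_j for j ∈ Ḡ. Then for each j = 1,…,n there is a contraction T̃_j on the closure of ran Q with T̃_j* Q h = Q T_j* h for all h, and T̃_j is a co-isometry for every j ∈ Ḡ. -/

import Mathlib

open ContinuousLinearMap Filter Topology

noncomputable instance {H : Type*} [NormedAddCommGroup H] [InnerProductSpace ℂ H]
    [CompleteSpace H] (K : Submodule ℂ H) : CompleteSpace K.topologicalClosure :=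
  K.isClosed_topologicalClosure.completeSpace_coe

/-- For a tuple `S` of operators and a finite index set `F`, the product `S_F` of the
operators `S i`, `i ∈ F` (in increasing index order). -/
noncomputable def subProd {H : Type*} [NormedAddCommGroup H] [InnerProductSpace ℂ H]
    {m : ℕ} (S : Fin m → (H →L[ℂ] H)) (F : Finset (Fin m)) : H →L[ℂ] H :=
  ((F.sort (· ≤ ·)).map S).prod

set_option maxHeartbeats 1000000 in
/-- Let `T = (T_1,…,T_n)` be commuting contractions, `G ⊆ {1,…,n}` with complement `Ḡ`,
and `Q ≥ 0` with `Q² = SOT-lim T_Ḡ^m T_Ḡ^{*m}`. Then for each `j` there is a contraction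
`T̃_j` on the closure of `ran Q` with `T̃_j* (Q h) = Q (T_j* h)`, and `T̃_j` is a
co-isometry for every `j ∈ Ḡ`. -/
theorem tuple_limit_coisometries {H : Type*} [NormedAddCommGroup H]
    [InnerProductSpace ℂ H] [CompleteSpace H] {n : ℕ} (T : Fin n → (H →L[ℂ] H))
    (hcomm : ∀ i j, Commute (T i) (T j)) (hcontr : ∀ i, ‖T i‖ ≤ 1)
    (G : Finset (Fin n)) (Q : H →L[ℂ] H) (hQ : Q.IsPositive)
    (hlim : ∀ h : H,
      Tendsto (fun m : ℕ => (subProd T Gᶜ ^ m * (adjoint (subProd T Gᶜ)) ^ m) h)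
        atTop (𝓝 ((Q ^ 2) h))) :
    ∃ Tt : Fin n → ((LinearMap.range (Q : H →ₗ[ℂ] H)).topologicalClosure →L[ℂ]
        (LinearMap.range (Q : H →ₗ[ℂ] H)).topologicalClosure),
      (∀ j, ‖Tt j‖ ≤ 1) ∧
      (∀ (j : Fin n) (h : H),
        adjoint (Tt j) ⟨Q h, Submodule.le_topologicalClosure _
            (LinearMap.mem_range_self (Q : H →ₗ[ℂ] H) h)⟩
          = ⟨Q (adjoint (T j) h), Submodule.le_topologicalClosure _
              (LinearMap.mem_range_self (Q : H →ₗ[ℂ] H) (adjoint (T j) h))⟩) ∧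
      (∀ j ∈ Gᶜ, Tt j ∘L adjoint (Tt j) = 1) := by
  classical
  set S : H →L[ℂ] H := subProd T Gᶜ with hS
  have hadj_pow : ∀ (A : H →L[ℂ] H) (m : ℕ), adjoint (A ^ m) = (adjoint A) ^ m := by
    intro A m
    rw [← star_eq_adjoint, ← star_eq_adjoint, star_pow]
  -- commutation of each `T j` with `S`
  have hcommS : ∀ j : Fin n, Commute (T j) S := by
    intro j
    apply Commute.list_prod_right
    intro y hy
    obtain ⟨i, -, rfl⟩ := List.mem_map.1 hy
    exact hcomm j i
  have hQsa : adjoint Q = Q := hQ.isSelfAdjoint.adjoint_eq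
  -- the norm limit
  have hnorm : ∀ h : H,
      Tendsto (fun m : ℕ => ‖((adjoint S) ^ m) h‖) atTop (𝓝 ‖Q h‖) := by
    intro h
    have h1 : Tendsto (fun m : ℕ => (inner ℂ ((S ^ m * (adjoint S) ^ m) h) h : ℂ)) atTop
        (𝓝 (inner ℂ ((Q ^ 2) h) h : ℂ)) :=
      (hlim h).inner tendsto_const_nhds
    have e1 : ∀ m : ℕ, (inner ℂ ((S ^ m * (adjoint S) ^ m) h) h : ℂ)
        = ((‖((adjoint S) ^ m) h‖ ^ 2 : ℝ) : ℂ) := by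
      intro m
      have : (S ^ m * (adjoint S) ^ m) h = (S ^ m) (((adjoint S) ^ m) h) := rfl
      rw [this, ← adjoint_inner_right, hadj_pow, inner_self_eq_norm_sq_to_K]
      norm_cast
    have e2 : (inner ℂ ((Q ^ 2) h) h : ℂ) = ((‖Q h‖ ^ 2 : ℝ) : ℂ) := by
      have : (Q ^ 2) h = Q (Q h) := by rw [pow_two]; rfl
      rw [this]
      nth_rewrite 1 [← hQsa]
      rw [adjoint_inner_left, inner_self_eq_norm_sq_to_K]
      norm_cast
    simp only [e1, e2] at h1
    have h2 : Tendsto (fun m : ℕ => ‖((adjoint S) ^ m) h‖ ^ 2) atTop (𝓝 (‖Q h‖ ^ 2)) := by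
      have h2 := (Complex.continuous_re.tendsto _).comp h1
      simpa [Function.comp_def, ← Complex.ofReal_pow] using h2
    have h3 := h2.sqrt
    simpa [Real.sqrt_sq (norm_nonneg _)] using h3
  -- adjoint contractions
  have hadjT_norm : ∀ (j : Fin n) (x : H), ‖adjoint (T j) x‖ ≤ ‖x‖ := by
    intro j x
    have h1 : ‖adjoint (T j)‖ = ‖T j‖ :=
      LinearIsometryEquiv.norm_map
        (adjoint : (H →L[ℂ] H) ≃ₗᵢ⋆[ℂ] (H →L[ℂ] H)) (T j)
    calc ‖adjoint (T j) x‖ ≤ ‖adjoint (T j)‖ * ‖x‖ := le_opNorm _ _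
      _ ≤ 1 * ‖x‖ := by
          apply mul_le_mul_of_nonneg_right _ (norm_nonneg _)
          rw [h1]; exact hcontr j
      _ = ‖x‖ := one_mul _
  have hcommadj : ∀ (j : Fin n) (m : ℕ) (h : H),
      ((adjoint S) ^ m) (adjoint (T j) h) = adjoint (T j) (((adjoint S) ^ m) h) := by
    intro j m h
    have hc : Commute (adjoint (T j)) ((adjoint S) ^ m) := by
      have := (hcommS j).star_star
      rw [star_eq_adjoint, star_eq_adjoint] at this
      exact this.pow_right m
    have := DFunLike.congr_fun hc.eq h
    simpa [ContinuousLinearMap.mul_apply] using this.symm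
  -- Q-contraction
  have hcontrQ : ∀ (j : Fin n) (h : H), ‖Q (adjoint (T j) h)‖ ≤ ‖Q h‖ := by
    intro j h
    refine le_of_tendsto_of_tendsto' (hnorm (adjoint (T j) h)) (hnorm h) (fun m => ?_)
    rw [hcommadj j m h]
    exact hadjT_norm j _
  -- Q-contraction for products over lists
  have hlist : ∀ l : List (Fin n), ∀ h : H, ‖Q (adjoint ((l.map T).prod) h)‖ ≤ ‖Q h‖ := by
    intro l
    induction l with
    | nil =>
      intro h
      simp [← star_eq_adjoint]
    | cons i t ih =>
      intro h
      have e1 : ((i :: t).map T).prod = T i * (t.map T).prod := by simp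
      have e2 : adjoint (((i :: t).map T).prod) h
          = adjoint ((t.map T).prod) (adjoint (T i) h) := by
        rw [e1, ← star_eq_adjoint, star_mul]
        simp [star_eq_adjoint, ContinuousLinearMap.mul_apply]
      rw [e2]
      exact (ih (adjoint (T i) h)).trans (hcontrQ i h)
  -- Q-isometry for j in the complement
  have hisoQ : ∀ j ∈ Gᶜ, ∀ h : H, ‖Q (adjoint (T j) h)‖ = ‖Q h‖ := by
    intro j hj h
    have hA : ‖Q (adjoint S h)‖ = ‖Q h‖ := by
      have t1 : Tendsto (fun m : ℕ => ‖((adjoint S) ^ (m + 1)) h‖) atTop (𝓝 ‖Q h‖) :=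
        (hnorm h).comp (tendsto_add_atTop_nat 1)
      have t2 : Tendsto (fun m : ℕ => ‖((adjoint S) ^ (m + 1)) h‖) atTop
          (𝓝 ‖Q (adjoint S h)‖) := by
        have e : ∀ m : ℕ, ((adjoint S) ^ (m + 1)) h = ((adjoint S) ^ m) (adjoint S h) := by
          intro m; rw [pow_succ]; rfl
        simpa only [e] using hnorm (adjoint S h)
      exact tendsto_nhds_unique t2 t1
    have hmem : j ∈ Gᶜ.sort (· ≤ ·) := (Finset.mem_sort _).2 hj
    have hperm : List.Perm ((Gᶜ.sort (· ≤ ·)).map T)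
        (T j :: (((Gᶜ.sort (· ≤ ·)).erase j).map T)) := by
      rw [← List.map_cons]
      exact (List.perm_cons_erase hmem).map T
    have hpw : ((Gᶜ.sort (· ≤ ·)).map T).Pairwise Commute := by
      apply List.pairwise_of_forall_mem_list
      intro a ha b hb
      obtain ⟨i, -, rfl⟩ := List.mem_map.1 ha
      obtain ⟨k, -, rfl⟩ := List.mem_map.1 hb
      exact hcomm i k
    have hSdec : S = T j * ((((Gᶜ.sort (· ≤ ·)).erase j).map T).prod) := by
      have h2 := hperm.prod_eq' hpw
      rw [List.prod_cons] at h2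
      exact h2
    have happ : adjoint S h
        = adjoint (((((Gᶜ.sort (· ≤ ·)).erase j).map T).prod)) (adjoint (T j) h) := by
      rw [hSdec, ← star_eq_adjoint, star_mul]
      simp [star_eq_adjoint, ContinuousLinearMap.mul_apply]
    have le1 : ‖Q h‖ ≤ ‖Q (adjoint (T j) h)‖ := by
      rw [← hA, happ]
      exact hlist _ _
    exact le_antisymm (hcontrQ j h) le1
  -- construction of the operators on the closure of the range of Q
  set Qlin : H →ₗ[ℂ] H := (Q : H →ₗ[ℂ] H) with hQlin
  set K : Submodule ℂ H := (LinearMap.range Qlin).topologicalClosure with hK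
  have hmemK : ∀ h : H, Q h ∈ K := fun h =>
    Submodule.le_topologicalClosure _ (LinearMap.mem_range_self Qlin h)
  set QK : H →L[ℂ] ↥K := Q.codRestrict K hmemK with hQK
  have hx' : ∀ x : LinearMap.range Qlin,
      ∃ h : H, x = ⟨Q h, LinearMap.mem_range_self Qlin h⟩ := by
    rintro ⟨x, h, rfl⟩; exact ⟨h, rfl⟩
  -- inclusion of range Q into K, as an isometric continuous linear map with dense range
  let e₀ : LinearMap.range Qlin →ₗ[ℂ] ↥K :=
    Submodule.inclusion (Submodule.le_topologicalClosure _)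
  let e : LinearMap.range Qlin →L[ℂ] ↥K :=
    LinearMap.mkContinuous e₀ 1 (fun x => by rw [one_mul]; rfl)
  have henorm : ∀ x, ‖e x‖ = ‖x‖ := fun x => rfl
  have h_ui : IsUniformInducing e :=
    (AddMonoidHomClass.isometry_of_norm e henorm).isUniformInducing
  have h_dense : DenseRange e := by
    intro x
    obtain ⟨x, hx⟩ := x
    have hx1 : x ∈ closure ((LinearMap.range Qlin : Submodule ℂ H) : Set H) := by
      rw [← Submodule.topologicalClosure_coe]
      exact hx
    rcases mem_closure_iff_seq_limit.1 hx1 with ⟨u, hu, hulim⟩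
    have t1 : Tendsto
        (fun m => (⟨u m, Submodule.le_topologicalClosure _ (hu m)⟩ : ↥K)) atTop
        (𝓝 ⟨x, hx⟩) := tendsto_subtype_rng.2 hulim
    exact mem_closure_of_tendsto t1
      (Eventually.of_forall fun m => ⟨⟨u m, hu m⟩, rfl⟩)
  have key : ∀ j : Fin n, ∃ B : ↥K →L[ℂ] ↥K, ‖B‖ ≤ 1 ∧
      (∀ h : H, B ⟨Q h, hmemK h⟩ = ⟨Q (adjoint (T j) h), hmemK _⟩) ∧
      (j ∈ Gᶜ → ∀ x : ↥K, ‖B x‖ = ‖x‖) := by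
    intro j
    have hle : LinearMap.ker Qlin ≤
        LinearMap.ker ((QK : H →ₗ[ℂ] ↥K) ∘ₗ ((adjoint (T j) : H →L[ℂ] H) : H →ₗ[ℂ] H)) := by
      intro h hh
      have h0 : Q h = 0 := hh
      have h1 : ‖Q (adjoint (T j) h)‖ ≤ 0 := by
        have := hcontrQ j h
        rwa [h0, norm_zero] at this
      have h2 : Q (adjoint (T j) h) = 0 :=
        norm_le_zero_iff.1 h1
      rw [LinearMap.mem_ker]
      exact Subtype.ext h2
    set f₀ : LinearMap.range Qlin →ₗ[ℂ] ↥K :=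
      ((LinearMap.ker Qlin).liftQ
          ((QK : H →ₗ[ℂ] ↥K) ∘ₗ ((adjoint (T j) : H →L[ℂ] H) : H →ₗ[ℂ] H)) hle) ∘ₗ
        (Qlin.quotKerEquivRange).symm.toLinearMap with hf₀def
    have hf₀ : ∀ h : H,
        f₀ ⟨Q h, LinearMap.mem_range_self Qlin h⟩ = QK (adjoint (T j) h) := by
      intro h
      have h1 : Qlin.quotKerEquivRange.symm ⟨Q h, LinearMap.mem_range_self Qlin h⟩
          = (LinearMap.ker Qlin).mkQ h :=
        Qlin.quotKerEquivRange_symm_apply_image h (LinearMap.mem_range_self Qlin h)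
      rw [hf₀def]
      simp only [LinearMap.coe_comp, Function.comp_apply, LinearEquiv.coe_coe]
      rw [h1, Submodule.mkQ_apply, Submodule.liftQ_apply]
      rfl
    have hf₀le : ∀ x : LinearMap.range Qlin, ‖f₀ x‖ ≤ 1 * ‖x‖ := by
      intro x
      obtain ⟨h, rfl⟩ := hx' x
      rw [one_mul, hf₀ h]
      calc ‖QK (adjoint (T j) h)‖ = ‖Q (adjoint (T j) h)‖ := rfl
        _ ≤ ‖Q h‖ := hcontrQ j h
        _ = ‖(⟨Q h, LinearMap.mem_range_self Qlin h⟩ : LinearMap.range Qlin)‖ := rfl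
    set f : LinearMap.range Qlin →L[ℂ] ↥K := LinearMap.mkContinuous f₀ 1 hf₀le with hfdef
    have hfapp : ∀ x, f x = f₀ x := fun x => rfl
    refine ⟨f.extend e, ?_, ?_, ?_⟩
    · -- norm bound
      have h1 : ∀ x : LinearMap.range Qlin, ‖x‖ ≤ ((1 : NNReal) : ℝ) * ‖e x‖ := by
        intro x
        rw [NNReal.coe_one, one_mul, henorm]
      have h2 := opNorm_extend_le f h_dense h1
      have h3 : ‖f‖ ≤ 1 := LinearMap.mkContinuous_norm_le f₀ zero_le_one hf₀le
      calc ‖f.extend e‖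
          ≤ ((1 : NNReal) : ℝ) * ‖f‖ := h2
        _ = ‖f‖ := by rw [NNReal.coe_one, one_mul]
        _ ≤ 1 := h3
    · -- intertwining
      intro h
      have e2 : e ⟨Q h, LinearMap.mem_range_self Qlin h⟩ = ⟨Q h, hmemK h⟩ := rfl
      have e1 : f.extend e (e ⟨Q h, LinearMap.mem_range_self Qlin h⟩)
          = f ⟨Q h, LinearMap.mem_range_self Qlin h⟩ :=
        extend_eq f h_dense h_ui _
      rw [← e2, e1, hfapp, hf₀ h]
      rfl
    · -- isometry on K
      intro hj x
      refine h_dense.induction_on x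
        (isClosed_eq (continuous_norm.comp (f.extend e).continuous)
          continuous_norm) ?_
      intro y
      obtain ⟨h, rfl⟩ := hx' y
      have e1 : f.extend e
            (e ⟨Q h, LinearMap.mem_range_self Qlin h⟩)
          = f ⟨Q h, LinearMap.mem_range_self Qlin h⟩ :=
        extend_eq f h_dense h_ui _
      rw [e1, hfapp, hf₀ h, henorm]
      calc ‖QK (adjoint (T j) h)‖ = ‖Q (adjoint (T j) h)‖ := rfl
        _ = ‖Q h‖ := hisoQ j hj h
        _ = ‖(⟨Q h, LinearMap.mem_range_self Qlin h⟩ : LinearMap.range Qlin)‖ := rfl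
  choose B hB1 hB2 hB3 using key
  refine ⟨fun j => adjoint (B j), ?_, ?_, ?_⟩
  · intro j
    have h1 : ‖adjoint (B j)‖ = ‖B j‖ :=
      LinearIsometryEquiv.norm_map
        (adjoint : (↥K →L[ℂ] ↥K) ≃ₗᵢ⋆[ℂ] (↥K →L[ℂ] ↥K)) (B j)
    rw [h1]; exact hB1 j
  · intro j h
    rw [adjoint_adjoint]
    exact hB2 j h
  · intro j hj
    rw [adjoint_adjoint]
    exact ((B j).norm_map_iff_adjoint_comp_self).1 (hB3 j hj)
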